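/- If H is a connected induced subgraph of a connected graph G, then dem(G) - dem(G|_H) ≤ |V(G)| - |V(H)|. -/
import Mathlib


open SimpleGraph

variable {V : Type*}

/-- Edge `e` is monitored by vertex `x` in `G`: some distance from `x` changes
when `e` is removed. -/
def monitors (G : SimpleGraph V) (x : V) (e : Sym2 V) : Prop :=
  ∃ y : V, G.edist x y ≠ (G.deleteEdges {e}).edist x y

/-- `M` is a distance-edge-monitoring set of `G`. -/
def IsDEMSet (G : SimpleGraph V) (M : Set V) : Prop :=
  ∀ e ∈ G.edgeSet, ∃ x ∈ M, monitors G x e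

/-- The distance-edge-monitoring number of `G`. -/
noncomputable def dem (G : SimpleGraph V) : ℕ :=
  sInf {n | ∃ M : Set V, M.ncard = n ∧ IsDEMSet G M}

/-- An endpoint of an edge always monitors it. -/
lemma endpoint_monitors (G : SimpleGraph V) {a b : V} (hab : G.Adj a b) :
    monitors G a s(a, b) := by
  refine ⟨b, ?_⟩
  have h1 : G.edist a b = 1 := edist_eq_one_iff_adj.mpr hab
  rw [h1]
  intro h
  have := edist_eq_one_iff_adj.mp h.symm
  simp [deleteEdges_adj] at this

theorem stmt16 [Fintype V] (G : SimpleGraph V) (hG : G.Connected) (s : Set V)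
    (hs : (SimpleGraph.induce s G).Connected) :
    dem G - sInf {n | ∃ M : Set V, M ⊆ s ∧ M.ncard = n ∧
        ∀ e ∈ G.edgeSet, (∀ v ∈ e, v ∈ s) → ∃ x ∈ M, monitors G x e} ≤
      Fintype.card V - s.ncard := by
  classical
  set A : Set ℕ := {n | ∃ M : Set V, M ⊆ s ∧ M.ncard = n ∧
      ∀ e ∈ G.edgeSet, (∀ v ∈ e, v ∈ s) → ∃ x ∈ M, monitors G x e} with hA
  have hAne : A.Nonempty := by
    refine ⟨s.ncard, s, subset_rfl, rfl, ?_⟩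
    intro e he hv
    induction e with
    | _ a b =>
      exact ⟨a, hv a (by simp), endpoint_monitors G he⟩
  obtain ⟨M, hMs, hMcard, hMmon⟩ := Nat.sInf_mem hAne
  -- M ∪ sᶜ is a DEM set of G
  have hDEM : IsDEMSet G (M ∪ sᶜ) := by
    intro e he
    induction e with
    | _ a b =>
      by_cases ha : a ∈ s
      · by_cases hb : b ∈ s
        · have hv : ∀ v ∈ s(a, b), v ∈ s := by
            intro v hv
            rcases Sym2.mem_iff.mp hv with rfl | rfl <;> assumption
          obtain ⟨x, hx, hmx⟩ := hMmon s(a, b) he hv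
          exact ⟨x, Or.inl hx, hmx⟩
        · exact ⟨b, Or.inr hb, by
            have := endpoint_monitors G he.symm
            rwa [Sym2.eq_swap] at this⟩
      · exact ⟨a, Or.inr ha, endpoint_monitors G he⟩
  have hdem_le : dem G ≤ (M ∪ sᶜ).ncard := Nat.sInf_le ⟨M ∪ sᶜ, rfl, hDEM⟩
  have hcard : (M ∪ sᶜ).ncard ≤ sInf A + (Fintype.card V - s.ncard) := by
    have h1 : (M ∪ sᶜ).ncard ≤ M.ncard + sᶜ.ncard :=
      Set.ncard_union_le M sᶜ
    have h2 : s.ncard + sᶜ.ncard = Fintype.card V := by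
      rw [Set.ncard_add_ncard_compl s]
      simp [Set.ncard_univ]
    have h3 : sᶜ.ncard = Fintype.card V - s.ncard := by omega
    rw [hMcard] at h1
    omega
  omega
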